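/- For every infinite cardinal λ, if artin(λ) exists then artin(λ) > λ and artin(λ) is a limit cardinal (it is not the successor of any cardinal). -/

import Mathlib

universe u

structure Alg (ι : Type u) (M : Type u) where
  arity : ι → ℕ
  op : (i : ι) → (Fin (arity i) → M) → M

namespace Alg

variable {ι M : Type u}

/-- A set is closed under all operations of the algebra. -/
def Closed (A : Alg ι M) (S : Set M) : Prop :=
  ∀ (i : ι) (x : Fin (A.arity i) → M), (∀ k, x k ∈ S) → A.op i x ∈ S

/-- Membership in the subalgebra generated by `X`. -/
inductive cl (A : Alg ι M) (X : Set M) : M → Prop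
  | base {m : M} (h : m ∈ X) : cl A X m
  | op (i : ι) (x : Fin (A.arity i) → M) (h : ∀ k, cl A X (x k)) : cl A X (A.op i x)

/-- A subset is free if no element lies in the subalgebra generated by the others. -/
def Free (A : Alg ι M) (X : Set M) : Prop :=
  ∀ x ∈ X, ¬ A.cl (X \ {x}) x

/-- An algebra is Artinian if there is no infinite strictly descending chain of
(nonempty closed) subalgebras. -/
def Artinian (A : Alg ι M) : Prop :=
  ¬ ∃ S : ℕ → Set M, (∀ n, (S n).Nonempty ∧ A.Closed (S n)) ∧ ∀ n, S (n + 1) ⊂ S n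

end Alg

open Cardinal

/-- `ArtinAt lam κ` : every algebra of cardinality κ with at most lam operations is
non-Artinian. -/
def ArtinAt (lam κ : Cardinal.{u}) : Prop :=
  ∀ (ι M : Type u) (A : Alg ι M), #ι ≤ lam → #M = κ → ¬ A.Artinian

/-- `FrAt lam κ` : every algebra of cardinality κ with at most lam operations has an
infinite free subset. -/
def FrAt (lam κ : Cardinal.{u}) : Prop :=
  ∀ (ι M : Type u) (A : Alg ι M), #ι ≤ lam → #M = κ →
    ∃ X : Set M, X.Infinite ∧ A.Free X


noncomputable section Stmt11Aux
attribute [local instance] Classical.propDecidable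

variable {ι M T : Type u} [LinearOrder T]

/-- partial inverse of the naming embedding -/
def eeAux (n : (x : T) → (M ⊕ (Set.Iio x)) ↪ M) (x : T) (d : M) : M ⊕ T :=
  if h : ∃ z, n x z = d then Sum.elim Sum.inl (fun y => Sum.inr y.1) h.choose
  else Sum.inl d

def colAux (n : (x : T) → (M ⊕ (Set.Iio x)) ↪ M) : M ⊕ T → M ⊕ T → M ⊕ T
  | Sum.inr x, Sum.inr y => if h : y < x then Sum.inl (n x (Sum.inr ⟨y, h⟩)) else Sum.inr x
  | Sum.inr x, Sum.inl m => Sum.inl (n x (Sum.inl m))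
  | Sum.inl m, _ => Sum.inl m

def genAux (n : (x : T) → (M ⊕ (Set.Iio x)) ↪ M) : M ⊕ T → M ⊕ T → M ⊕ T
  | Sum.inr x, Sum.inl d => eeAux n x d
  | a, _ => a

def W (A : Alg ι M) (n : (x : T) → (M ⊕ (Set.Iio x)) ↪ M) :
    Alg (ι ⊕ ULift.{u} Bool) (M ⊕ T) where
  arity := fun j => match j with
    | Sum.inl i => A.arity i
    | Sum.inr _ => 2
  op := fun j => match j with
    | Sum.inl i => fun v =>
        if h : ∀ k, ∃ m, v k = Sum.inl m then Sum.inl (A.op i fun k => (h k).choose)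
        else v (not_forall.mp h).choose
    | Sum.inr ⟨false⟩ => fun v => colAux n (v 0) (v 1)
    | Sum.inr ⟨true⟩ => fun v => genAux n (v 0) (v 1)

variable (n : (x : T) → (M ⊕ (Set.Iio x)) ↪ M) (A : Alg ι M)

lemma eeAux_n (x : T) (z : M ⊕ (Set.Iio x)) :
    eeAux n x (n x z) = Sum.elim Sum.inl (fun y => Sum.inr y.1) z := by
  have h : ∃ z', n x z' = n x z := ⟨z, rfl⟩
  unfold eeAux
  rw [dif_pos h, (n x).injective h.choose_spec]

lemma W_op_inl (i : ι) (x : Fin (A.arity i) → M) :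
    (W A n).op (Sum.inl i) (fun k => Sum.inl (x k)) = Sum.inl (A.op i x) := by
  have h : ∀ k : Fin (A.arity i), ∃ m, (Sum.inl (x k) : M ⊕ T) = Sum.inl m :=
    fun k => ⟨x k, rfl⟩
  show (if h : ∀ k : Fin (A.arity i), ∃ m, (Sum.inl (x k) : M ⊕ T) = Sum.inl m then
      Sum.inl (A.op i fun k => (h k).choose) else _) = _
  rw [dif_pos h]
  have hx : (fun k => (h k).choose) = x := funext fun k => (Sum.inl_injective (h k).choose_spec).symm
  rw [hx]

lemma W_op_col (x y : T) (h : y < x) :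
    (W A n).op (Sum.inr ⟨false⟩) ![Sum.inr x, Sum.inr y] = Sum.inl (n x (Sum.inr ⟨y, h⟩)) := by
  show colAux n (![(Sum.inr x : M ⊕ T), Sum.inr y] 0) (![(Sum.inr x : M ⊕ T), Sum.inr y] 1) = _
  simp only [Matrix.cons_val_zero, Matrix.cons_val_one, Matrix.head_cons]
  show (if h' : y < x then (Sum.inl (n x (Sum.inr ⟨y, h'⟩)) : M ⊕ T) else Sum.inr x) = _
  rw [dif_pos h]

lemma W_op_gen (x : T) (d : M) :
    (W A n).op (Sum.inr ⟨true⟩) ![Sum.inr x, Sum.inl d] = eeAux n x d := by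
  show genAux n (![(Sum.inr x : M ⊕ T), Sum.inl d] 0) (![(Sum.inr x : M ⊕ T), Sum.inl d] 1) = _
  simp only [Matrix.cons_val_zero, Matrix.cons_val_one, Matrix.head_cons]
  rfl

lemma W_key {S S' : Set (M ⊕ T)} (hS : (W A n).Closed S) (hS' : (W A n).Closed S')
    (hsub : S' ⊆ S) (hD : ∀ m : M, Sum.inl m ∈ S → Sum.inl m ∈ S')
    {x y : T} (h : y < x) (hx : Sum.inr x ∈ S') (hy : Sum.inr y ∈ S) : Sum.inr y ∈ S' := by
  have h1 : Sum.inl (n x (Sum.inr ⟨y, h⟩)) ∈ S := by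
    have := hS (Sum.inr ⟨false⟩) ![Sum.inr x, Sum.inr y] (by
      intro k
      fin_cases k
      · exact hsub hx
      · exact hy)
    rwa [W_op_col] at this
  have h2 : Sum.inl (n x (Sum.inr ⟨y, h⟩)) ∈ S' := hD _ h1
  have h3 := hS' (Sum.inr ⟨true⟩) ![Sum.inr x, Sum.inl (n x (Sum.inr ⟨y, h⟩))] (by
    intro k
    fin_cases k
    · exact hx
    · exact h2)
  rw [W_op_gen, eeAux_n] at h3
  exact h3

lemma W_artinian [WellFoundedLT T] (hA : A.Artinian) : (W A n).Artinian := by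
  rintro ⟨S, hS, hdesc⟩
  set D : ℕ → Set M := fun k => {m | Sum.inl m ∈ S k} with hD
  have hDc : ∀ k, A.Closed (D k) := by
    intro k i x hx
    have := (hS k).2 (Sum.inl i) (fun j => Sum.inl (x j)) (fun j => hx j)
    rwa [W_op_inl] at this
  have hDmono : ∀ {a b : ℕ}, a ≤ b → D b ⊆ D a := by
    intro a b hab
    induction hab with
    | refl => exact subset_rfl
    | step _ ih =>
      exact fun m hm => ih ((hdesc _).subset hm)
  by_cases hfin : {k | ¬ D k ⊆ D (k + 1)}.Finite
  · -- finitely many drops of the M-part; the T-part must descend forever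
    obtain ⟨N, hN⟩ := hfin.bddAbove
    set N' := N + 1 with hN'
    have hsubD : ∀ k, D (N' + k) ⊆ D (N' + k + 1) := by
      intro k
      by_contra hc
      have := hN (Set.mem_setOf.mpr hc)
      omega
    have hw : ∀ k, ∃ y : T, Sum.inr y ∈ S (N' + k) ∧ Sum.inr y ∉ S (N' + k + 1) := by
      intro k
      obtain ⟨b, hb1, hb2⟩ := Set.exists_of_ssubset (hdesc (N' + k))
      match b with
      | Sum.inl m => exact absurd (hsubD k hb1) hb2
      | Sum.inr y => exact ⟨y, hb1, hb2⟩
    choose y hy1 hy2 using hw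
    have hlt : ∀ k, y (k + 1) < y k := by
      intro k
      rcases lt_trichotomy (y (k + 1)) (y k) with h | h | h
      · exact h
      · exact absurd (h ▸ hy1 (k + 1)) (hy2 k)
      · exact absurd
          (W_key n A (hS (N' + k)).2 (hS (N' + k + 1)).2 (hdesc (N' + k)).subset
            (fun m hm => hsubD k hm) h (hy1 (k + 1)) (hy1 k))
          (hy2 k)
    exact (RelEmbedding.natGT y hlt).not_wellFounded
      (IsWellFounded.wf (r := ((· < ·) : T → T → Prop)))
  · -- infinitely many drops of the M-part: contradicts Artinian-ness of A
    rw [← Set.not_infinite, not_not] at hfin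
    set p : ℕ → Prop := fun k => ¬ D k ⊆ D (k + 1) with hp
    apply hA
    refine ⟨fun k => D (Nat.nth p k), fun k => ⟨?_, hDc _⟩, fun k => ?_⟩
    · obtain ⟨m, hm, _⟩ := Set.not_subset.mp (Nat.nth_mem_of_infinite hfin k)
      exact ⟨m, hm⟩
    · have h1 : Nat.nth p k < Nat.nth p (k + 1) := Nat.nth_strictMono hfin (lt_add_one k)
      have h2 : D (Nat.nth p (k + 1)) ⊆ D (Nat.nth p k + 1) := hDmono (by omega)
      have h3 : ¬ D (Nat.nth p k) ⊆ D (Nat.nth p k + 1) := Nat.nth_mem_of_infinite hfin k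
      constructor
      · exact h2.trans (hDmono (Nat.le_succ _))
      · intro hcon
        exact h3 (fun m hm => h2 (hcon hm))

end Stmt11Aux

/-- If artin(λ) exists then artin(λ) > λ and artin(λ) is a limit
cardinal (not the successor of any cardinal). -/
theorem stmt11 (lam κ₀ : Cardinal.{u}) (hlam : ℵ₀ ≤ lam)
    (hleast : IsLeast {κ | ArtinAt lam κ} κ₀) :
    lam < κ₀ ∧ ∀ μ : Cardinal.{u}, κ₀ ≠ Order.succ μ := by
  have hgt : lam < κ₀ := by
    by_contra hc
    push_neg at hc
    -- the constants algebra of size κ₀ is Artinian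
    refine hleast.1 κ₀.out κ₀.out ⟨fun _ => 0, fun i _ => i⟩ (by rw [Cardinal.mk_out]; exact hc)
      (Cardinal.mk_out κ₀) ?_
    rintro ⟨S, hS, hdesc⟩
    obtain ⟨b, hb1, hb2⟩ := Set.exists_of_ssubset (hdesc 0)
    exact hb2 ((hS 1).2 b Fin.elim0 (fun k => k.elim0))
  refine ⟨hgt, ?_⟩
  intro μ heq
  have hlamμ : lam ≤ μ := Order.lt_succ_iff.mp (heq ▸ hgt)
  have hμinf : ℵ₀ ≤ μ := hlam.trans hlamμ
  have hnot : ¬ ArtinAt lam μ := by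
    intro h
    have h2 := hleast.2 h
    rw [heq] at h2
    exact absurd h2 (not_le.mpr (Order.lt_succ μ))
  rw [ArtinAt] at hnot
  push_neg at hnot
  obtain ⟨ι, M, A, hι, hM, hart⟩ := hnot
  set T := (Order.succ μ).ord.ToType with hT
  have hIio : ∀ x : T, #(M ⊕ (Set.Iio x)) ≤ #M := by
    intro x
    have h1 : #(Set.Iio x) < Order.succ μ := Cardinal.mk_Iio_ord_toType x
    have h2 : #(Set.Iio x) ≤ μ := Order.lt_succ_iff.mp h1
    calc #(M ⊕ (Set.Iio x)) = #M + #(Set.Iio x) := by simp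
    _ ≤ μ + μ := add_le_add (le_of_eq hM) h2
    _ = μ := Cardinal.add_eq_self hμinf
    _ = #M := hM.symm
  have n : ∀ x : T, (M ⊕ (Set.Iio x)) ↪ M := fun x =>
    (Cardinal.le_def _ _ |>.mp (hIio x)).some
  have hι' : #(ι ⊕ ULift.{u} Bool) ≤ lam := by
    have h2 : #(ULift.{u} Bool) ≤ lam := by
      have hfin : #(ULift.{u} Bool) < ℵ₀ := Cardinal.lt_aleph0_of_finite _
      exact hfin.le.trans hlam
    calc #(ι ⊕ ULift.{u} Bool) = #ι + #(ULift.{u} Bool) := by simp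
    _ ≤ lam + lam := add_le_add hι h2
    _ = lam := Cardinal.add_eq_self hlam
  have hB : #(M ⊕ T) = κ₀ := by
    rw [heq]
    calc #(M ⊕ T) = #M + #T := by simp
    _ = μ + Order.succ μ := by rw [hM, hT, Cardinal.mk_ord_toType]
    _ = Order.succ μ := Cardinal.add_eq_right (hμinf.trans (Order.lt_succ μ).le)
        (Order.lt_succ μ).le
  exact hleast.1 _ _ (W A n) hι' hB (W_artinian n A hart)
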